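/- Every transitive dynamical system is either almost mean equicontinuous (has a mean equicontinuous point) or mean sensitive, and these alternatives are mutually exclusive. -/

import Mathlib

open Filter Topology MeasureTheory
open scoped Classical

noncomputable def avgDist {Z : Type*} [MetricSpace Z] (R : Z → Z) (x y : Z) (n : ℕ) : ℝ :=
  (n : ℝ)⁻¹ * ∑ i ∈ Finset.range n, dist (R^[i] x) (R^[i] y)

def MeanEquicontinuous {Z : Type*} [MetricSpace Z] (R : Z → Z) : Prop :=
  ∀ ε > 0, ∃ δ > 0, ∀ x y : Z, dist x y < δ →
    Filter.limsup (avgDist R x y) Filter.atTop < ε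

def MeanEqPtAt {Z : Type*} [MetricSpace Z] (R : Z → Z) (x : Z) : Prop :=
  ∀ ε > 0, ∃ δ > 0, ∀ y : Z, dist x y < δ →
    Filter.limsup (avgDist R x y) Filter.atTop < ε

def MeanSensitive {Z : Type*} [MetricSpace Z] (R : Z → Z) : Prop :=
  ∃ δ > 0, ∀ x : Z, ∀ ε > 0, ∃ y : Z, dist x y < ε ∧
    δ < Filter.limsup (avgDist R x y) Filter.atTop

section Helpers

variable {Z : Type*} [MetricSpace Z] (R : Z → Z)

lemma avgDist_nonneg (x y : Z) (n : ℕ) : 0 ≤ avgDist R x y n := by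
  unfold avgDist
  positivity

lemma avgDist_le_of_dist_le {C : ℝ} (hC : ∀ a b : Z, dist a b ≤ C) (x y : Z) (n : ℕ) :
    avgDist R x y n ≤ C := by
  have hC0 : 0 ≤ C := le_trans dist_nonneg (hC x x)
  rcases Nat.eq_zero_or_pos n with h0 | hpos
  · simp [avgDist, h0, hC0]
  · unfold avgDist
    have hsum : ∑ i ∈ Finset.range n, dist (R^[i] x) (R^[i] y) ≤ n * C := by
      calc ∑ i ∈ Finset.range n, dist (R^[i] x) (R^[i] y)
          ≤ ∑ _i ∈ Finset.range n, C := Finset.sum_le_sum fun i _ => hC _ _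
        _ = n * C := by simp [mul_comm]
    have hninv : (0:ℝ) ≤ (n:ℝ)⁻¹ := by positivity
    calc (n : ℝ)⁻¹ * ∑ i ∈ Finset.range n, dist (R^[i] x) (R^[i] y)
        ≤ (n : ℝ)⁻¹ * (n * C) := by exact mul_le_mul_of_nonneg_left hsum hninv
      _ = C := by
          rw [← mul_assoc, inv_mul_cancel₀ (by exact_mod_cast hpos.ne'), one_mul]

lemma avgDist_boundedUnder {C : ℝ} (hC : ∀ a b : Z, dist a b ≤ C) (x y : Z) :
    IsBoundedUnder (· ≤ ·) atTop (avgDist R x y) :=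
  isBoundedUnder_of ⟨C, fun n => avgDist_le_of_dist_le R hC x y n⟩

lemma avgDist_coboundedUnder (x y : Z) :
    IsCoboundedUnder (· ≤ ·) atTop (avgDist R x y) :=
  IsBoundedUnder.isCoboundedUnder_le (isBoundedUnder_of ⟨0, fun n => avgDist_nonneg R x y n⟩)

/-- Pointwise triangle inequality for averaged distances. -/
lemma avgDist_triangle (x y z : Z) (n : ℕ) :
    avgDist R x z n ≤ avgDist R x y n + avgDist R y z n := by
  unfold avgDist
  rw [← mul_add, ← Finset.sum_add_distrib]
  have hninv : (0:ℝ) ≤ (n:ℝ)⁻¹ := by positivity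
  exact mul_le_mul_of_nonneg_left
    (Finset.sum_le_sum fun i _ => dist_triangle _ (R^[i] y) _) hninv

/-- Limsup version of the triangle inequality. -/
lemma limsup_avgDist_triangle {C : ℝ} (hC : ∀ a b : Z, dist a b ≤ C) (x y z : Z) :
    limsup (avgDist R x z) atTop ≤
      limsup (avgDist R x y) atTop + limsup (avgDist R y z) atTop := by
  have h1 : limsup (avgDist R x z) atTop ≤
      limsup (fun n => avgDist R x y n + avgDist R y z n) atTop := by
    refine limsup_le_limsup (Eventually.of_forall fun n => avgDist_triangle R x y z n)
      (avgDist_coboundedUnder R x z) ?_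
    exact isBoundedUnder_of ⟨C + C, fun n =>
      add_le_add (avgDist_le_of_dist_le R hC x y n) (avgDist_le_of_dist_le R hC y z n)⟩
  refine h1.trans ?_
  exact limsup_add_le
    (isBoundedUnder_of ⟨0, fun n => avgDist_nonneg R x y n⟩)
    (avgDist_boundedUnder R hC x y)
    (avgDist_coboundedUnder R y z)
    (avgDist_boundedUnder R hC y z)

lemma avgDist_le_shift (x y : Z) (n : ℕ) :
    avgDist R x y n ≤ dist x y * (n:ℝ)⁻¹ + avgDist R (R x) (R y) n := by
  unfold avgDist
  have hsum : ∑ i ∈ Finset.range n, dist (R^[i] x) (R^[i] y)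
      ≤ dist x y + ∑ i ∈ Finset.range n, dist (R^[i] (R x)) (R^[i] (R y)) := by
    calc ∑ i ∈ Finset.range n, dist (R^[i] x) (R^[i] y)
        ≤ ∑ i ∈ Finset.range (n+1), dist (R^[i] x) (R^[i] y) := by
          refine Finset.sum_le_sum_of_subset_of_nonneg
            (Finset.range_subset_range.2 (Nat.le_succ n)) fun _ _ _ => dist_nonneg
      _ = dist x y + ∑ i ∈ Finset.range n, dist (R^[i+1] x) (R^[i+1] y) := by
          rw [Finset.sum_range_succ']; simp [add_comm]
      _ = dist x y + ∑ i ∈ Finset.range n, dist (R^[i] (R x)) (R^[i] (R y)) := by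
          simp [Function.iterate_succ_apply]
  have hninv : (0:ℝ) ≤ (n:ℝ)⁻¹ := by positivity
  calc (n : ℝ)⁻¹ * ∑ i ∈ Finset.range n, dist (R^[i] x) (R^[i] y)
      ≤ (n : ℝ)⁻¹ * (dist x y + ∑ i ∈ Finset.range n, dist (R^[i] (R x)) (R^[i] (R y))) :=
        mul_le_mul_of_nonneg_left hsum hninv
    _ = dist x y * (n:ℝ)⁻¹ + (n : ℝ)⁻¹ * ∑ i ∈ Finset.range n, dist (R^[i] (R x)) (R^[i] (R y)) := by
        ring

lemma limsup_avgDist_le_shift {C : ℝ} (hC : ∀ a b : Z, dist a b ≤ C) (x y : Z) :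
    limsup (avgDist R x y) atTop ≤ limsup (avgDist R (R x) (R y)) atTop := by
  have h1 : limsup (avgDist R x y) atTop ≤
      limsup (fun n : ℕ => dist x y * (n:ℝ)⁻¹ + avgDist R (R x) (R y) n) atTop := by
    refine limsup_le_limsup (Eventually.of_forall fun n => avgDist_le_shift R x y n)
      (avgDist_coboundedUnder R x y) ?_
    refine isBoundedUnder_of ⟨dist x y + C, fun n => ?_⟩
    refine add_le_add ?_ (avgDist_le_of_dist_le R hC (R x) (R y) n)
    rcases Nat.eq_zero_or_pos n with h0 | hpos
    · simp [h0, dist_nonneg]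
    · have : (n:ℝ)⁻¹ ≤ 1 := by
        rw [inv_le_one_iff₀]; right; exact_mod_cast hpos
      calc dist x y * (n:ℝ)⁻¹ ≤ dist x y * 1 :=
            mul_le_mul_of_nonneg_left this dist_nonneg
        _ = dist x y := mul_one _
  refine h1.trans ?_
  have htend : Tendsto (fun n : ℕ => dist x y * (n:ℝ)⁻¹) atTop (𝓝 0) := by
    simpa using (tendsto_inv_atTop_nhds_zero_nat.const_mul (dist x y))
  have h2 := limsup_add_le (u := fun n : ℕ => dist x y * (n:ℝ)⁻¹)
    (v := avgDist R (R x) (R y)) (f := atTop)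
    (htend.isBoundedUnder_ge) (htend.isBoundedUnder_le)
    (avgDist_coboundedUnder R (R x) (R y)) (avgDist_boundedUnder R hC (R x) (R y))
  rw [htend.limsup_eq, zero_add] at h2
  exact h2

lemma limsup_avgDist_le_iterate {C : ℝ} (hC : ∀ a b : Z, dist a b ≤ C) (x y : Z) (n : ℕ) :
    limsup (avgDist R x y) atTop ≤ limsup (avgDist R (R^[n] x) (R^[n] y)) atTop := by
  induction n with
  | zero => simp
  | succ m ih =>
    refine ih.trans ?_
    rw [Function.iterate_succ_apply', Function.iterate_succ_apply']
    exact limsup_avgDist_le_shift R hC _ _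

lemma avgDist_comm (x y : Z) : avgDist R x y = avgDist R y x := by
  funext n
  unfold avgDist
  simp [dist_comm]

end Helpers

theorem transitive_dichotomy_almost_meanEq_or_meanSensitive
    {X : Type*} [MetricSpace X] [CompactSpace X] (T : X → X) (hT : Continuous T)
    (htrans : ∃ x : X, Dense (Set.range fun n : ℕ => T^[n] x)) :
    Xor' (∃ x : X, MeanEqPtAt T x)
      (∃ δ > 0, ∀ x : X, ∀ U ∈ nhds x, ∃ y ∈ U,
        δ < Filter.limsup (avgDist T x y) Filter.atTop) := by
  obtain ⟨z, hz⟩ := htrans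
  -- a uniform bound on distances
  obtain ⟨C, hC⟩ : ∃ C : ℝ, ∀ a b : X, dist a b ≤ C := by
    obtain ⟨r, hr⟩ := (Metric.isBounded_iff_subset_closedBall z).1
      (isCompact_univ (X := X)).isBounded
    refine ⟨r + r, fun a b => ?_⟩
    have ha : dist a z ≤ r := hr (Set.mem_univ a)
    have hb : dist b z ≤ r := hr (Set.mem_univ b)
    calc dist a b ≤ dist a z + dist z b := dist_triangle _ _ _
      _ ≤ r + r := add_le_add ha (by rwa [dist_comm])
  by_cases hB : ∃ δ > 0, ∀ x : X, ∀ U ∈ nhds x, ∃ y ∈ U,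
      δ < Filter.limsup (avgDist T x y) Filter.atTop
  · -- mean sensitive: show no mean equicontinuous point exists
    refine Or.inr ⟨hB, ?_⟩
    rintro ⟨x, hx⟩
    obtain ⟨δ, hδ, hsens⟩ := hB
    obtain ⟨δ', hδ', hδ'x⟩ := hx δ hδ
    obtain ⟨y, hyU, hylt⟩ := hsens x (Metric.ball x δ') (Metric.ball_mem_nhds x hδ')
    have : dist x y < δ' := by rwa [dist_comm, ← Metric.mem_ball]
    exact absurd (hδ'x y this) (not_lt.2 hylt.le)
  · -- not mean sensitive: the transitive point is a mean equicontinuity point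
    refine Or.inl ⟨⟨z, ?_⟩, hB⟩
    intro ε hε
    push_neg at hB
    obtain ⟨x, U, hU, hUle⟩ := hB (ε/4) (by linarith)
    have hUle' : ∀ y ∈ U, limsup (avgDist T x y) atTop ≤ ε/4 := hUle
    -- the interior of U is open, nonempty, so the orbit of z meets it
    have hxint : x ∈ interior U := mem_interior_iff_mem_nhds.2 hU
    obtain ⟨p, hprange, hpV⟩ := hz.exists_mem_open isOpen_interior ⟨x, hxint⟩
    obtain ⟨n, rfl⟩ := hprange
    -- choose δ so that T^[n] maps the δ-ball around z into interior U
    have hcont : ContinuousAt (T^[n]) z := (hT.iterate n).continuousAt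
    have hmem : (T^[n]) ⁻¹' (interior U) ∈ nhds z :=
      hcont (isOpen_interior.mem_nhds hpV)
    obtain ⟨δ, hδpos, hball⟩ := Metric.mem_nhds_iff.1 hmem
    refine ⟨δ, hδpos, fun y hy => ?_⟩
    have hyV : T^[n] y ∈ interior U := hball (by rwa [Metric.mem_ball, dist_comm])
    -- estimate: D(z,y) ≤ D(T^n z, T^n y) ≤ D(T^n z, x) + D(x, T^n y) ≤ ε/4 + ε/4
    have h1 : limsup (avgDist T z y) atTop ≤
        limsup (avgDist T (T^[n] z) (T^[n] y)) atTop :=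
      limsup_avgDist_le_iterate T hC z y n
    have h2 : limsup (avgDist T (T^[n] z) (T^[n] y)) atTop ≤
        limsup (avgDist T (T^[n] z) x) atTop + limsup (avgDist T x (T^[n] y)) atTop :=
      limsup_avgDist_triangle T hC _ _ _
    have h3 : limsup (avgDist T (T^[n] z) x) atTop ≤ ε/4 := by
      rw [avgDist_comm]
      exact hUle' _ (interior_subset hpV)
    have h4 : limsup (avgDist T x (T^[n] y)) atTop ≤ ε/4 :=
      hUle' _ (interior_subset hyV)
    linarith
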